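/- Dimension bound for max-information: for any normalized state ρ^{ABC} on A ⊗ B ⊗ C, I_max(A : BC)_ρ ≤ I_max(A : B)_ρ + 2 log|C| (non-smooth version). -/

import Mathlib

set_option linter.unusedSectionVars false
set_option maxHeartbeats 1000000

open Matrix ComplexOrder Kronecker

/-- Partial trace over the second system of an operator on `A ⊗ B`. -/
noncomputable def margA {a b : Type*} [Fintype a] [Fintype b]
    (ρ : Matrix (a × b) (a × b) ℂ) : Matrix a a ℂ :=
  Matrix.of fun i j => ∑ k : b, ρ (i, k) (j, k)

/-- Max-information `I_max(A : B)_ρ := inf_σ D_max(ρ^{AB} ‖ ρ^A ⊗ σ^B)`, infimum over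
normalized states `σ` on `B`, where `D_max(ρ‖τ) := inf {λ : 2^λ τ ≥ ρ}` (Loewner order). -/
noncomputable def Imax {a b : Type*} [Fintype a] [Fintype b] [DecidableEq a] [DecidableEq b]
    (ρ : Matrix (a × b) (a × b) ℂ) : ℝ :=
  sInf {lam : ℝ | ∃ σ : Matrix b b ℂ, σ.PosSemidef ∧ σ.trace = 1 ∧
      ((((2 : ℝ) ^ lam : ℝ) : ℂ) • (margA ρ ⊗ₖ σ) - ρ).PosSemidef}

/-- The marginal `ρ^{AB}` of a state on `A ⊗ (B ⊗ C)`, obtained by partial trace over `C`. -/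
noncomputable def margAB {a b c : Type*} [Fintype a] [Fintype b] [Fintype c]
    (ρ : Matrix (a × b × c) (a × b × c) ℂ) : Matrix (a × b) (a × b) ℂ :=
  Matrix.of fun p q => ∑ k : c, ρ (p.1, p.2, k) (q.1, q.2, k)

section Aux

variable {d c : Type*} [Fintype d] [Fintype c] [DecidableEq d] [DecidableEq c]

lemma ImaxAux.half_nonneg {x : ℂ} (h : 0 ≤ 2 * x) : 0 ≤ x := by
  rw [Complex.le_def] at h ⊢
  simp only [Complex.zero_re, Complex.zero_im, Complex.mul_re, Complex.mul_im] at h ⊢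
  norm_num at h
  constructor <;> linarith [h.1, h.2]

lemma ImaxAux.dot_sum_right {ι κ : Type*} [Fintype ι] [Fintype κ] (v : ι → ℂ)
    (w : κ → ι → ℂ) : v ⬝ᵥ (∑ k, w k) = ∑ k, v ⬝ᵥ w k := by
  simp only [dotProduct, Finset.sum_apply, Finset.mul_sum]
  exact Finset.sum_comm

lemma ImaxAux.sum_dot {ι κ : Type*} [Fintype ι] [Fintype κ] (v : κ → ι → ℂ) (w : ι → ℂ) :
    (∑ k, v k) ⬝ᵥ w = ∑ k, v k ⬝ᵥ w := by
  simp only [dotProduct, Finset.sum_apply, Finset.sum_mul]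
  exact Finset.sum_comm

lemma ImaxAux.mulVec_sum' {ι κ : Type*} [Fintype ι] [Fintype κ] (X : Matrix ι ι ℂ)
    (w : κ → ι → ℂ) : X *ᵥ (∑ k, w k) = ∑ k, X *ᵥ w k := by
  have := map_sum X.mulVecLin w Finset.univ
  simpa only [Matrix.mulVecLin_apply] using this

/-- Cauchy–Schwarz type bound: `Q(∑ u_k) ≤ |κ| ∑_k Q(u_k)` for a PSD quadratic form. -/
lemma ImaxAux.sum_quad_le {ι κ : Type*} [Fintype ι] [Fintype κ] {X : Matrix ι ι ℂ}
    (hX : X.PosSemidef) (u : κ → ι → ℂ) :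
    star (∑ k, u k) ⬝ᵥ (X *ᵥ ∑ k, u k) ≤
      (Fintype.card κ : ℂ) * ∑ k, star (u k) ⬝ᵥ (X *ᵥ u k) := by
  set B : κ → κ → ℂ := fun k l => star (u k) ⬝ᵥ (X *ᵥ u l) with hB
  have expand : star (∑ k, u k) ⬝ᵥ (X *ᵥ ∑ k, u k) = ∑ k, ∑ l, B k l := by
    rw [star_sum, ImaxAux.sum_dot]
    exact Finset.sum_congr rfl fun k _ => by
      rw [ImaxAux.mulVec_sum', ImaxAux.dot_sum_right]
  have key : ∀ k l, 0 ≤ B k k + B l l - B k l - B l k := by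
    intro k l
    have h := hX.dotProduct_mulVec_nonneg (u k - u l)
    have e : star (u k - u l) ⬝ᵥ (X *ᵥ (u k - u l)) = B k k + B l l - B k l - B l k := by
      simp only [star_sub, sub_dotProduct, dotProduct_sub, mulVec_sub, hB]
      ring
    rwa [e] at h
  have h2 : 0 ≤ ∑ k : κ, ∑ l : κ, (B k k + B l l - B k l - B l k) :=
    Finset.sum_nonneg fun k _ => Finset.sum_nonneg fun l _ => key k l
  have c1 : ∑ _k : κ, ∑ _l : κ, B _k _k = (Fintype.card κ : ℂ) * ∑ k, B k k := by
    simp [Finset.sum_const, Finset.card_univ, Finset.mul_sum]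
  have c2 : ∑ _k : κ, ∑ _l : κ, B _l _l = (Fintype.card κ : ℂ) * ∑ k, B k k := by
    rw [Finset.sum_comm]; exact c1
  have c3 : ∑ k : κ, ∑ l : κ, B l k = ∑ k : κ, ∑ l : κ, B k l := Finset.sum_comm
  have h3 : ∑ k : κ, ∑ l : κ, (B k k + B l l - B k l - B l k) =
      2 * ((Fintype.card κ : ℂ) * ∑ k, B k k - ∑ k, ∑ l, B k l) := by
    simp only [Finset.sum_sub_distrib, Finset.sum_add_distrib, c1, c2, c3]
    ring
  rw [h3] at h2
  have h4 : (0:ℂ) ≤ (Fintype.card κ : ℂ) * ∑ k, B k k - ∑ k, ∑ l, B k l :=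
    ImaxAux.half_nonneg h2
  rw [expand]
  exact sub_nonneg.mp h4

lemma ImaxAux.conjTranspose_kron {l m n p : Type*} (A : Matrix l m ℂ) (B : Matrix n p ℂ) :
    (A ⊗ₖ B)ᴴ = Aᴴ ⊗ₖ Bᴴ := by
  ext ⟨i,j⟩ ⟨k,l⟩
  simp [conjTranspose_apply, kroneckerMap_apply]

lemma ImaxAux.psd_kron {A : Matrix d d ℂ} {B : Matrix c c ℂ} (hA : A.PosSemidef)
    (hB : B.PosSemidef) : (A ⊗ₖ B).PosSemidef := by
  exact hA.kronecker hB

lemma ImaxAux.psd_smul {M : Matrix d d ℂ} (hM : M.PosSemidef) {r : ℝ} (hr : 0 ≤ r) :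
    (((r : ℝ) : ℂ) • M).PosSemidef := by
  refine posSemidef_iff_dotProduct_mulVec.mpr ⟨?_, ?_⟩
  · rw [IsHermitian, conjTranspose_smul, hM.1]
    congr 1
    simp
  · intro x
    rw [smul_mulVec, dotProduct_smul]
    exact smul_nonneg (by exact_mod_cast Complex.zero_le_real.mpr hr) (hM.dotProduct_mulVec_nonneg x)

lemma ImaxAux.margA_isHermitian {X : Matrix (d × c) (d × c) ℂ} (hX : X.IsHermitian) :
    (margA X).IsHermitian := by
  ext i j
  simp only [conjTranspose_apply, margA, Matrix.of_apply, star_sum]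
  exact Finset.sum_congr rfl fun k _ => congrFun (congrFun hX (i,k)) (j,k)

lemma ImaxAux.margA_trace (X : Matrix (d × c) (d × c) ℂ) : (margA X).trace = X.trace := by
  simp [Matrix.trace, margA, Matrix.diag, Fintype.sum_prod_type]

/-- embed a vector on `d` into `d × c` at position `k` -/
def ImaxAux.emb (v : d → ℂ) (k : c) : d × c → ℂ := fun p => if p.2 = k then v p.1 else 0

lemma ImaxAux.quad_margA (X : Matrix (d × c) (d × c) ℂ) (v : d → ℂ) :
    star v ⬝ᵥ (margA X *ᵥ v) = ∑ k : c, star (ImaxAux.emb v k) ⬝ᵥ (X *ᵥ ImaxAux.emb v k) := by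
  simp only [dotProduct, mulVec, margA, Matrix.of_apply, Pi.star_apply, ImaxAux.emb,
    Fintype.sum_prod_type, Finset.mul_sum, Finset.sum_mul]
  conv_lhs => enter [2, x]; rw [Finset.sum_comm]
  rw [Finset.sum_comm]
  refine Finset.sum_congr rfl fun k _ => ?_
  simp only [apply_ite (star : ℂ → ℂ), star_zero, ite_mul, zero_mul, mul_ite, mul_zero]
  simp [Finset.sum_ite_eq', Finset.mul_sum]

lemma ImaxAux.margA_psd {X : Matrix (d × c) (d × c) ℂ} (hX : X.PosSemidef) :
    (margA X).PosSemidef := by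
  refine .of_dotProduct_mulVec_nonneg (ImaxAux.margA_isHermitian hX.1) fun v => ?_
  rw [ImaxAux.quad_margA]
  exact Finset.sum_nonneg fun k _ => hX.dotProduct_mulVec_nonneg _

lemma ImaxAux.quad_kron_one (M : Matrix d d ℂ) (v : d × c → ℂ) :
    star v ⬝ᵥ ((M ⊗ₖ (1 : Matrix c c ℂ)) *ᵥ v) =
      ∑ k : c, star (fun j => v (j, k)) ⬝ᵥ (M *ᵥ fun j => v (j, k)) := by
  simp only [dotProduct, mulVec, kroneckerMap_apply, Pi.star_apply,
    Fintype.sum_prod_type, Matrix.one_apply, mul_ite, mul_one, mul_zero, ite_mul, zero_mul,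
    Finset.sum_ite_eq', Finset.mem_univ, if_true]
  rw [Finset.sum_comm]
  refine Finset.sum_congr rfl fun k _ => ?_
  simp [Finset.mul_sum]

/-- The dimension bound: `|c| • (Tr_c X ⊗ 1) - X` is PSD for PSD `X`. -/
lemma ImaxAux.key_dim {X : Matrix (d × c) (d × c) ℂ} (hX : X.PosSemidef) :
    ((((Fintype.card c : ℝ)) : ℂ) • (margA X ⊗ₖ (1 : Matrix c c ℂ)) - X).PosSemidef := by
  refine posSemidef_iff_dotProduct_mulVec.mpr ⟨?_, ?_⟩
  · apply IsHermitian.sub _ hX.1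
    rw [IsHermitian, conjTranspose_smul, ImaxAux.conjTranspose_kron,
      (ImaxAux.margA_isHermitian hX.1), conjTranspose_one]
    congr 1
    simp
  · intro v
    rw [sub_mulVec, dotProduct_sub, smul_mulVec, dotProduct_smul,
      ImaxAux.quad_kron_one, sub_nonneg, smul_eq_mul]
    have hsum : ∑ k : c, ImaxAux.emb (fun j => v (j, k)) k = v := by
      funext p
      simp only [ImaxAux.emb, Finset.sum_apply]
      simp
    calc star v ⬝ᵥ (X *ᵥ v)
        = star (∑ k : c, ImaxAux.emb (fun j => v (j, k)) k) ⬝ᵥ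
            (X *ᵥ ∑ k : c, ImaxAux.emb (fun j => v (j, k)) k) := by rw [hsum]
      _ ≤ (Fintype.card c : ℂ) * ∑ k : c, star (ImaxAux.emb (fun j => v (j, k)) k) ⬝ᵥ
            (X *ᵥ ImaxAux.emb (fun j => v (j, k)) k) := ImaxAux.sum_quad_le hX _
      _ ≤ (Fintype.card c : ℂ) * ∑ k : c,
            star (fun j => v (j, k)) ⬝ᵥ (margA X *ᵥ fun j => v (j, k)) := by
          apply mul_le_mul_of_nonneg_left _
            (by exact_mod_cast Complex.zero_le_real.mpr (Nat.cast_nonneg _))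
          apply Finset.sum_le_sum
          intro k _
          rw [ImaxAux.quad_margA]
          exact Finset.single_le_sum
            (f := fun m => star (ImaxAux.emb (fun j => v (j, k)) m) ⬝ᵥ
              (X *ᵥ ImaxAux.emb (fun j => v (j, k)) m))
            (fun m _ => hX.dotProduct_mulVec_nonneg _) (Finset.mem_univ k)
      _ = ((Fintype.card c : ℝ) : ℂ) * ∑ k : c,
            star (fun j => v (j, k)) ⬝ᵥ (margA X *ᵥ fun j => v (j, k)) := by norm_num

lemma ImaxAux.psd_trace_nonneg {n : Type*} [Fintype n] [DecidableEq n] {M : Matrix n n ℂ}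
    (hM : M.PosSemidef) : 0 ≤ M.trace := by
  refine Finset.sum_nonneg fun i _ => ?_
  have h := hM.dotProduct_mulVec_nonneg (Pi.single i 1)
  simpa [dotProduct, mulVec, Pi.single_apply, Finset.sum_ite_eq, Finset.sum_ite_eq'] using h

end Aux

/-- Dimension bound for the max-information:
`I_max(A : BC)_ρ ≤ I_max(A : B)_ρ + 2 log |C|`. -/
theorem Imax_dim_bound {a b c : Type*} [Fintype a] [Fintype b] [Fintype c]
    [DecidableEq a] [DecidableEq b] [DecidableEq c]
    (ρ : Matrix (a × b × c) (a × b × c) ℂ) (hρ : ρ.PosSemidef) (hρ1 : ρ.trace = 1) :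
    Imax ρ ≤ Imax (margAB ρ) + 2 * Real.logb 2 (Fintype.card c) := by
  classical
  -- nonemptiness
  have hne : Nonempty (a × b × c) := by
    by_contra h
    rw [not_nonempty_iff] at h
    rw [Matrix.trace] at hρ1
    simp [Finset.univ_eq_empty] at hρ1
  obtain ⟨⟨i0, j0, k0⟩⟩ := hne
  haveI : Nonempty a := ⟨i0⟩
  haveI : Nonempty b := ⟨j0⟩
  haveI : Nonempty c := ⟨k0⟩
  have hrc : (0:ℝ) < (Fintype.card c : ℝ) := by
    exact_mod_cast Fintype.card_pos
  have hrb : (0:ℝ) < (Fintype.card b : ℝ) := by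
    exact_mod_cast Fintype.card_pos
  set L : ℝ := Real.logb 2 (Fintype.card c) with hL
  set M : Matrix (a × b) (a × b) ℂ := margAB ρ with hMdef
  set pA : (a × b) × c ≃ a × b × c := Equiv.prodAssoc a b c with hpA
  set X' : Matrix ((a × b) × c) ((a × b) × c) ℂ := ρ.submatrix pA pA with hX'
  have hX'psd : X'.PosSemidef := hρ.submatrix pA
  have hmargX' : margA X' = M := by
    ext p q
    simp [margA, margAB, hMdef, hX', Matrix.submatrix_apply, hpA, Equiv.prodAssoc]
  have hMpsd : M.PosSemidef := hmargX' ▸ ImaxAux.margA_psd hX'psd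
  have hX'tr : X'.trace = 1 := by
    rw [hX', Matrix.trace, ← hρ1, Matrix.trace]
    exact Equiv.sum_comp pA (fun p => ρ.diag p)
  have hMtr : M.trace = 1 := by rw [← hmargX', ImaxAux.margA_trace, hX'tr]
  have hmargMarg : margA M = margA ρ := by
    ext i j
    simp [margA, margAB, hMdef, Fintype.sum_prod_type]
  have hρtrmarg : (margA ρ).trace = 1 := by rw [ImaxAux.margA_trace, hρ1]
  -- the set for Imax ρ is bounded below by 0
  have hS_bdd : BddBelow {lam : ℝ | ∃ σ : Matrix (b × c) (b × c) ℂ, σ.PosSemidef ∧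
      σ.trace = 1 ∧ ((((2 : ℝ) ^ lam : ℝ) : ℂ) • (margA ρ ⊗ₖ σ) - ρ).PosSemidef} := by
    refine ⟨0, fun lam hlam => ?_⟩
    obtain ⟨σ, hσpsd, hσtr, hT⟩ := hlam
    have htr := ImaxAux.psd_trace_nonneg hT
    rw [Matrix.trace_sub, Matrix.trace_smul, trace_kronecker, hρtrmarg, hσtr, hρ1] at htr
    have h1 : (1:ℝ) ≤ (2:ℝ) ^ lam := by
      have : (0:ℂ) ≤ (((2:ℝ) ^ lam - 1 : ℝ) : ℂ) := by push_cast; simpa using htr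
      have := Complex.zero_le_real.mp this
      linarith
    by_contra hneg
    push_neg at hneg
    have : (2:ℝ) ^ lam < (2:ℝ) ^ (0:ℝ) :=
      Real.rpow_lt_rpow_of_exponent_lt (by norm_num) hneg
    rw [Real.rpow_zero] at this
    linarith
  -- the set for Imax M is nonempty
  have hSB_ne : {lam : ℝ | ∃ σ : Matrix b b ℂ, σ.PosSemidef ∧ σ.trace = 1 ∧
      ((((2 : ℝ) ^ lam : ℝ) : ℂ) • (margA M ⊗ₖ σ) - M).PosSemidef}.Nonempty := by
    refine ⟨Real.logb 2 ((Fintype.card b : ℝ) ^ 2), (((Fintype.card b : ℝ)⁻¹ : ℝ) : ℂ) • 1,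
      ImaxAux.psd_smul Matrix.PosSemidef.one (by positivity), ?_, ?_⟩
    · rw [Matrix.trace_smul, Matrix.trace_one, smul_eq_mul]
      push_cast
      field_simp
    · have e1 : (2:ℝ) ^ Real.logb 2 ((Fintype.card b : ℝ) ^ 2) = (Fintype.card b : ℝ) ^ 2 :=
        Real.rpow_logb (by norm_num) (by norm_num) (by positivity)
      have e2 : ((((2:ℝ) ^ Real.logb 2 ((Fintype.card b : ℝ) ^ 2) : ℝ)) : ℂ) •
          (margA M ⊗ₖ ((((Fintype.card b : ℝ)⁻¹ : ℝ) : ℂ) • (1 : Matrix b b ℂ))) =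
          (((Fintype.card b : ℝ) : ℂ)) • (margA M ⊗ₖ (1 : Matrix b b ℂ)) := by
        rw [kronecker_smul, smul_smul, e1]
        congr 1
        push_cast
        field_simp
      rw [e2]
      exact ImaxAux.key_dim hMpsd
  -- main membership: shift from SB to S
  have mem_shift : ∀ μ ∈ {lam : ℝ | ∃ σ : Matrix b b ℂ, σ.PosSemidef ∧ σ.trace = 1 ∧
      ((((2 : ℝ) ^ lam : ℝ) : ℂ) • (margA M ⊗ₖ σ) - M).PosSemidef},
      μ + 2 * L ∈ {lam : ℝ | ∃ σ : Matrix (b × c) (b × c) ℂ, σ.PosSemidef ∧ σ.trace = 1 ∧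
      ((((2 : ℝ) ^ lam : ℝ) : ℂ) • (margA ρ ⊗ₖ σ) - ρ).PosSemidef} := by
    rintro μ ⟨σ, hσpsd, hσtr, hD⟩
    set r : ℝ := (Fintype.card c : ℝ) with hr
    refine ⟨((r⁻¹ : ℝ) : ℂ) • (σ ⊗ₖ (1 : Matrix c c ℂ)),
      ImaxAux.psd_smul (ImaxAux.psd_kron hσpsd Matrix.PosSemidef.one) (by positivity), ?_, ?_⟩
    · rw [Matrix.trace_smul, trace_kronecker, Matrix.trace_one, hσtr, smul_eq_mul]
      push_cast
      field_simp [hr]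
      simp [hr]
    · -- decompose as sum of two PSD matrices
      set D : Matrix (a × b) (a × b) ℂ :=
        ((((2:ℝ) ^ μ : ℝ) : ℂ)) • (margA M ⊗ₖ σ) - M with hDdef
      have e1 : (2:ℝ) ^ L = r := Real.rpow_logb (by norm_num) (by norm_num) hrc
      have e2 : (2:ℝ) ^ (μ + 2 * L) = (2:ℝ) ^ μ * r ^ 2 := by
        rw [Real.rpow_add (by norm_num), show (2:ℝ) * L = L + L by ring,
          Real.rpow_add (by norm_num), e1]
        ring
      have hrne : r ≠ 0 := ne_of_gt hrc
      have decomp : (((2:ℝ) ^ (μ + 2 * L) : ℝ) : ℂ) •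
            (margA ρ ⊗ₖ (((r⁻¹ : ℝ) : ℂ) • (σ ⊗ₖ (1 : Matrix c c ℂ)))) - ρ =
          (((r : ℝ) : ℂ) • (margA X' ⊗ₖ (1 : Matrix c c ℂ)) - X').submatrix pA.symm pA.symm +
          (((r : ℝ) : ℂ) • ((D ⊗ₖ (1 : Matrix c c ℂ)).submatrix pA.symm pA.symm)) := by
        rw [← hmargMarg, hmargX']
        ext ⟨i, k, l⟩ ⟨j, k', l'⟩
        simp only [Matrix.sub_apply, Matrix.add_apply, Matrix.smul_apply, kroneckerMap_apply,
          Matrix.submatrix_apply, smul_eq_mul, hDdef, hX', hpA, Equiv.prodAssoc,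
          Equiv.coe_fn_symm_mk, Equiv.coe_fn_mk, Matrix.one_apply, e2]
        push_cast [e2]
        by_cases hll : l = l' <;> simp [hll] <;> field_simp <;> ring
      rw [decomp]
      apply Matrix.PosSemidef.add
      · exact (ImaxAux.key_dim hX'psd).submatrix _
      · exact ImaxAux.psd_smul ((ImaxAux.psd_kron hD Matrix.PosSemidef.one).submatrix _)
          (le_of_lt hrc)
  -- conclude
  have main : ∀ μ ∈ {lam : ℝ | ∃ σ : Matrix b b ℂ, σ.PosSemidef ∧ σ.trace = 1 ∧
      ((((2 : ℝ) ^ lam : ℝ) : ℂ) • (margA M ⊗ₖ σ) - M).PosSemidef},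
      Imax ρ ≤ μ + 2 * L := fun μ hμ => csInf_le hS_bdd (mem_shift μ hμ)
  have hfinal : Imax ρ - 2 * L ≤ Imax M := by
    conv_rhs => rw [Imax]
    exact le_csInf hSB_ne fun μ hμ => by linarith [main μ hμ]
  rw [hMdef] at hfinal
  linarith
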